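/- Let (X,◁) be a finite abelian quandle. Then the commutator subgroup of its structure group G(X,◁) is finite and is contained in the center of G(X,◁). -/

import Mathlib

variable {X : Type*}

/-- Quandle axioms for a binary operation `op` (right-translation convention):
self-distributivity, bijectivity of right translations, idempotence. -/
structure IsQuandleOp (op : X → X → X) : Prop where
  sd : ∀ a b c, op (op a b) c = op (op a c) (op b c)
  bij : ∀ b, Function.Bijective fun a => op a b
  idem : ∀ a, op a a = a

/-- A quandle operation is abelian if `(a ◁ b) ◁ c = (a ◁ c) ◁ b`. -/
def IsAbelianOp (op : X → X → X) : Prop :=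
  ∀ a b c, op (op a b) c = op (op a c) b

/-- The relators `g_a g_b (g_b g_{a ◁ b})⁻¹` of the structure group. -/
def structureRels (op : X → X → X) : Set (FreeGroup X) :=
  {w | ∃ a b : X,
    w = FreeGroup.of a * FreeGroup.of b * (FreeGroup.of b * FreeGroup.of (op a b))⁻¹}

/-- The structure group `⟨g_a, a ∈ X | g_a g_b = g_b g_{a ◁ b}⟩` of a quandle. -/
abbrev StructureGroup (op : X → X → X) : Type _ := PresentedGroup (structureRels op)

open scoped commutatorElement

namespace StructAux

lemma comm_mul_central_left {G : Type*} [Group G] {z : G} (hz : z ∈ Subgroup.center G)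
    (x y : G) : ⁅x * z, y⁆ = ⁅x, y⁆ := by
  have h : z * y = y * z := (Subgroup.mem_center_iff.mp hz y).symm
  simp only [commutatorElement_def, mul_inv_rev]
  rw [mul_assoc x z y, h]
  group

lemma comm_mul_central_right {G : Type*} [Group G] {z : G} (hz : z ∈ Subgroup.center G)
    (x y : G) : ⁅x, y * z⁆ = ⁅x, y⁆ := by
  have h : z * x⁻¹ = x⁻¹ * z := (Subgroup.mem_center_iff.mp hz x⁻¹).symm
  simp only [commutatorElement_def, mul_inv_rev]
  rw [← mul_assoc x y z, mul_assoc (x * y) z x⁻¹, h]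
  group

variable {op : X → X → X}

/-- right translation as a permutation -/
noncomputable def rho (hq : IsQuandleOp op) (b : X) : Equiv.Perm X :=
  Equiv.ofBijective _ (hq.bij b)

lemma rho_apply (hq : IsQuandleOp op) (b a : X) : rho hq b a = op a b := rfl

lemma rho_comm (hq : IsQuandleOp op) (hab : IsAbelianOp op) (a b : X) :
    rho hq a * rho hq b = rho hq b * rho hq a := by
  ext x
  simp only [Equiv.Perm.mul_apply, rho_apply]
  exact (hab x a b).symm

lemma rho_op (hq : IsQuandleOp op) (hab : IsAbelianOp op) (a b : X) :
    rho hq (op a b) = rho hq a := by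
  ext y
  obtain ⟨x, rfl⟩ := (hq.bij b).2 y
  show op (op x b) (op a b) = op (op x b) a
  calc op (op x b) (op a b) = op (op x a) b := (hq.sd x a b).symm
    _ = op (op x b) a := hab x a b

lemma rels_hold (hq : IsQuandleOp op) (hab : IsAbelianOp op) :
    ∀ r ∈ structureRels op, FreeGroup.lift (rho hq) r = 1 := by
  rintro r ⟨a, b, rfl⟩
  simp only [map_mul, map_inv, FreeGroup.lift_apply_of, rho_op hq hab]
  rw [rho_comm hq hab a b]
  group

/-- the homomorphism from the structure group to Perm X -/
noncomputable def phi (hq : IsQuandleOp op) (hab : IsAbelianOp op) :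
    StructureGroup op →* Equiv.Perm X :=
  PresentedGroup.toGroup (rels_hold hq hab)

lemma phi_of (hq : IsQuandleOp op) (hab : IsAbelianOp op) (a : X) :
    phi hq hab (PresentedGroup.of a) = rho hq a :=
  PresentedGroup.toGroup.of _

lemma phi_comm_rho (hq : IsQuandleOp op) (hab : IsAbelianOp op) (x : StructureGroup op) (b : X) :
    rho hq b * phi hq hab x = phi hq hab x * rho hq b := by
  have hm : x ∈ (Subgroup.centralizer {rho hq b}).comap (phi hq hab) := by
    refine PresentedGroup.generated_by _ _ (fun j => ?_) x
    simp only [Subgroup.mem_comap, Subgroup.mem_centralizer_iff, Set.mem_singleton_iff,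
      phi_of, forall_eq]
    exact rho_comm hq hab b j
  exact Subgroup.mem_centralizer_iff.mp (Subgroup.mem_comap.mp hm) _ rfl

lemma phi_comm (hq : IsQuandleOp op) (hab : IsAbelianOp op) (x y : StructureGroup op) :
    Commute (phi hq hab x) (phi hq hab y) := by
  have hm : y ∈ (Subgroup.centralizer {phi hq hab x}).comap (phi hq hab) := by
    refine PresentedGroup.generated_by _ _ (fun j => ?_) y
    simp only [Subgroup.mem_comap, Subgroup.mem_centralizer_iff, Set.mem_singleton_iff,
      phi_of, forall_eq]
    exact (phi_comm_rho hq hab x j).symm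
  exact Subgroup.mem_centralizer_iff.mp (Subgroup.mem_comap.mp hm) _ rfl

lemma of_rel (hq : IsQuandleOp op) (hab : IsAbelianOp op) (c j : X) :
    (PresentedGroup.of c : StructureGroup op) * PresentedGroup.of j
      = PresentedGroup.of j * PresentedGroup.of (phi hq hab (PresentedGroup.of j) c) := by
  rw [phi_of, rho_apply]
  have h : (FreeGroup.of c * FreeGroup.of j * (FreeGroup.of j * FreeGroup.of (op c j))⁻¹ :
      FreeGroup X) ∈ Subgroup.normalClosure (structureRels op) :=
    Subgroup.subset_normalClosure ⟨c, j, rfl⟩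
  have h2 : (PresentedGroup.mk (structureRels op))
      (FreeGroup.of c * FreeGroup.of j * (FreeGroup.of j * FreeGroup.of (op c j))⁻¹) = 1 :=
    (QuotientGroup.eq_one_iff _).mpr h
  simp only [map_mul, map_inv] at h2
  exact mul_inv_eq_one.mp h2

/-- the subgroup of elements satisfying the conjugation formula -/
noncomputable def conjSub (hq : IsQuandleOp op) (hab : IsAbelianOp op) :
    Subgroup (StructureGroup op) where
  carrier := {x | ∀ a : X, PresentedGroup.of a * x = x * PresentedGroup.of (phi hq hab x a)}
  one_mem' := by intro a; simp
  mul_mem' := by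
    intro x y hx hy a
    simp only [Set.mem_setOf_eq] at hx hy ⊢
    rw [← mul_assoc, hx a, mul_assoc, hy (phi hq hab x a), map_mul]
    have h : (phi hq hab x * phi hq hab y) a = phi hq hab y (phi hq hab x a) := by
      rw [phi_comm hq hab x y]; rfl
    rw [h, mul_assoc]
  inv_mem' := by
    intro x hx a
    simp only [Set.mem_setOf_eq] at hx ⊢
    have ha : phi hq hab x (phi hq hab x⁻¹ a) = a := by
      rw [← Equiv.Perm.mul_apply, ← map_mul, mul_inv_cancel, map_one, Equiv.Perm.one_apply]
    have h := hx (phi hq hab x⁻¹ a)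
    rw [ha] at h
    calc PresentedGroup.of a * x⁻¹ = x⁻¹ * (x * PresentedGroup.of a) * x⁻¹ := by group
      _ = x⁻¹ * (PresentedGroup.of (phi hq hab x⁻¹ a) * x) * x⁻¹ := by rw [h]
      _ = x⁻¹ * PresentedGroup.of (phi hq hab x⁻¹ a) := by group

lemma conj_formula (hq : IsQuandleOp op) (hab : IsAbelianOp op) (x : StructureGroup op) (a : X) :
    PresentedGroup.of a * x = x * PresentedGroup.of (phi hq hab x a) :=
  PresentedGroup.generated_by _ (conjSub hq hab) (fun j c => of_rel hq hab c j) x a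

lemma ker_le_center (hq : IsQuandleOp op) (hab : IsAbelianOp op) :
    (phi hq hab).ker ≤ Subgroup.center (StructureGroup op) := by
  intro x hx
  rw [Subgroup.mem_center_iff]
  intro g
  have hm : g ∈ Subgroup.centralizer {x} := by
    refine PresentedGroup.generated_by _ _ (fun j => ?_) g
    rw [Subgroup.mem_centralizer_iff]
    intro h hh
    rw [Set.mem_singleton_iff] at hh
    rw [hh]
    have h1 := conj_formula hq hab x j
    rw [MonoidHom.mem_ker.mp hx, Equiv.Perm.one_apply] at h1
    exact h1.symm
  exact (Subgroup.mem_centralizer_iff.mp hm x rfl).symm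

end StructAux


open StructAux in
/-- For a finite abelian quandle, the commutator subgroup of its
structure group is finite and contained in the center. -/
theorem commutator_finite_and_central {X : Type*} [Finite X] (op : X → X → X)
    (hq : IsQuandleOp op) (hab : IsAbelianOp op) :
    Finite (commutator (StructureGroup op)) ∧
      commutator (StructureGroup op) ≤ Subgroup.center (StructureGroup op) := by
  set G := StructureGroup op with hG
  have hcomm_le_ker : commutator G ≤ (phi hq hab).ker := by
    rw [commutator_def, Subgroup.commutator_le]
    intro g₁ _ g₂ _
    rw [MonoidHom.mem_ker, map_commutatorElement]
    exact commutatorElement_eq_one_iff_commute.mpr (phi_comm hq hab g₁ g₂)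
  have hcentral : commutator G ≤ Subgroup.center G :=
    hcomm_le_ker.trans (ker_le_center hq hab)
  refine ⟨?_, hcentral⟩
  have hfinq : Finite (G ⧸ (phi hq hab).ker) :=
    Finite.of_equiv (phi hq hab).range (QuotientGroup.quotientKerEquivRange (phi hq hab)).symm
  have hfi : Subgroup.FiniteIndex (phi hq hab).ker :=
    Subgroup.finiteIndex_of_finite_quotient
  have hfiZ : Subgroup.FiniteIndex (Subgroup.center G) :=
    Subgroup.finiteIndex_of_le (ker_le_center hq hab)
  have hfinZ : Finite (G ⧸ Subgroup.center G) := Subgroup.finite_quotient_of_finiteIndex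
  set F : (G ⧸ Subgroup.center G) × (G ⧸ Subgroup.center G) → G :=
    fun p => ⁅p.1.out, p.2.out⁆ with hF
  have hsub : commutatorSet G ⊆ Set.range F := by
    rintro w ⟨x, y, rfl⟩
    refine ⟨((x : G ⧸ Subgroup.center G), (y : G ⧸ Subgroup.center G)), ?_⟩
    obtain ⟨zx, hzx⟩ := QuotientGroup.mk_out_eq_mul (Subgroup.center G) x
    obtain ⟨zy, hzy⟩ := QuotientGroup.mk_out_eq_mul (Subgroup.center G) y
    simp only [hF, hzx, hzy]
    rw [comm_mul_central_left zx.2, comm_mul_central_right zy.2]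
  haveI : Finite (commutatorSet G) := ((Set.finite_range F).subset hsub).to_subtype
  show Finite (_root_.commutator G)
  exact inferInstance
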